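/- Fix u ≥ 1, sites a = (−u,−1), b = (u,1), and a fixed x with −u < x < 0. Let (p_n) be any sequence of nonzero reals converging to 0, and let (y_n) be a sequence of reals with y_n > 1 and |x+u|^{p_n} + |y_n+1|^{p_n} = |x−u|^{p_n} + |y_n−1|^{p_n} for every n. Then y_n converges to −u/x (the hyperbola point h(x) = −u/x). -/

import Mathlib

open Filter

lemma slopeLim (t : ℝ) (ht : 0 < t) (p : ℕ → ℝ) (hp0 : ∀ n, p n ≠ 0)
    (hp : Tendsto p atTop (nhds 0)) :
    Tendsto (fun n => (t ^ (p n) - 1) / (p n)) atTop (nhds (Real.log t)) := by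
  have hd : HasDerivAt (fun q : ℝ => t ^ q) (Real.log t) 0 := by
    have := (Real.hasStrictDerivAt_const_rpow ht 0).hasDerivAt
    simpa using this
  have h1 : Tendsto p atTop (nhdsWithin (0:ℝ) {z | z ≠ 0}) :=
    tendsto_nhdsWithin_of_tendsto_nhds_of_eventually_within _ hp
      (Eventually.of_forall hp0)
  have h2 := (hasDerivAt_iff_tendsto_slope.mp hd).comp h1
  refine h2.congr fun n => ?_
  simp [slope_def_field, Real.rpow_zero]

lemma solve_lt (q : ℝ) (hq0 : q ≠ 0) (hql : -1 < q) (hqu : q < 1) {c d : ℝ}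
    (hc : 1 < c) (hd : 1 < d)
    (h : 0 < ((c+1) ^ q - (c-1) ^ q - ((d+1) ^ q - (d-1) ^ q)) / q) : c < d := by
  have hder : ∀ z ∈ Set.Ioi (1:ℝ),
      HasDerivAt (fun z : ℝ => (z+1) ^ q - (z-1) ^ q)
        (q * (z+1) ^ (q-1) * 1 - q * (z-1) ^ (q-1) * 1) z := by
    intro z hz
    have hz1 : (1:ℝ) < z := hz
    have h1 : HasDerivAt (fun z : ℝ => z + 1) 1 z := (hasDerivAt_id z).add_const 1
    have h2 : HasDerivAt (fun z : ℝ => z - 1) 1 z := (hasDerivAt_id z).sub_const 1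
    have h3 := (Real.hasDerivAt_rpow_const (x := z + 1) (p := q)
      (Or.inl (by linarith))).comp z h1
    have h4 := (Real.hasDerivAt_rpow_const (x := z - 1) (p := q)
      (Or.inl (ne_of_gt (by linarith : (0:ℝ) < z - 1)))).comp z h2
    exact h3.sub h4
  have hcont : ContinuousOn (fun z : ℝ => (z+1) ^ q - (z-1) ^ q) (Set.Ioi 1) :=
    fun z hz => ((hder z hz).continuousAt).continuousWithinAt
  have hbase : ∀ z ∈ Set.Ioi (1:ℝ), (z+1) ^ (q-1) < (z-1) ^ (q-1) := by
    intro z hz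
    have hz1 : (1:ℝ) < z := hz
    exact Real.rpow_lt_rpow_of_neg (by linarith) (by linarith) (by linarith)
  rcases hq0.lt_or_gt with hq | hq
  · -- q < 0 : strictly monotone
    have hmono : StrictMonoOn (fun z : ℝ => (z+1) ^ q - (z-1) ^ q) (Set.Ioi 1) := by
      apply strictMonoOn_of_deriv_pos (convex_Ioi 1) hcont
      intro z hz
      rw [interior_Ioi] at hz
      rw [(hder z hz).deriv]
      have := hbase z hz
      nlinarith
    have hlt : (c+1) ^ q - (c-1) ^ q < (d+1) ^ q - (d-1) ^ q := by
      rcases div_pos_iff.mp h with ⟨_, h2⟩ | ⟨h1, _⟩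
      · linarith
      · linarith
    exact (hmono.lt_iff_lt hc hd).mp hlt
  · -- 0 < q : strictly antitone
    have hanti : StrictAntiOn (fun z : ℝ => (z+1) ^ q - (z-1) ^ q) (Set.Ioi 1) := by
      apply strictAntiOn_of_deriv_neg (convex_Ioi 1) hcont
      intro z hz
      rw [interior_Ioi] at hz
      rw [(hder z hz).deriv]
      have := hbase z hz
      nlinarith
    have hlt : (d+1) ^ q - (d-1) ^ q < (c+1) ^ q - (c-1) ^ q := by
      rcases div_pos_iff.mp h with ⟨h1, _⟩ | ⟨_, h2⟩
      · linarith
      · linarith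
    exact (hanti.lt_iff_gt hd hc).mp hlt

/-- cell H₂: bisector points above `y = 1` over a fixed `x ∈ (−u,0)`
converge to the hyperbola point `h(x) = −u/x` as `p → 0`. -/
theorem stmt6 (u x : ℝ) (hu : 1 ≤ u) (hx1 : -u < x) (hx2 : x < 0)
    (p : ℕ → ℝ) (hp0 : ∀ n, p n ≠ 0) (hp : Tendsto p atTop (nhds 0))
    (y : ℕ → ℝ) (hy : ∀ n, 1 < y n)
    (hbis : ∀ n, |x + u| ^ (p n) + |y n + 1| ^ (p n)
                 = |x - u| ^ (p n) + |y n - 1| ^ (p n)) :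
    Tendsto y atTop (nhds (-u / x)) := by
  have hu0 : (0:ℝ) < u := lt_of_lt_of_le one_pos hu
  have hA : (0:ℝ) < x + u := by linarith
  have hB : (0:ℝ) < u - x := by linarith
  have hystar : (1:ℝ) < -u / x := by
    rw [lt_div_iff_of_neg hx2]; linarith
  have hbis' : ∀ n, (x + u) ^ (p n) + (y n + 1) ^ (p n)
      = (u - x) ^ (p n) + (y n - 1) ^ (p n) := by
    intro n
    have h1 : |x + u| = x + u := abs_of_pos hA
    have h2 : |x - u| = u - x := by rw [abs_of_neg (by linarith : x - u < 0)]; ring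
    have h3 : |y n + 1| = y n + 1 := abs_of_pos (by linarith [hy n])
    have h4 : |y n - 1| = y n - 1 := abs_of_pos (by linarith [hy n])
    have := hbis n
    rw [h1, h2, h3, h4] at this
    exact this
  -- eventually |p n| < 1
  have hpsmall : ∀ᶠ n in atTop, -1 < p n ∧ p n < 1 := by
    have h1 := (tendsto_order.1 hp).1 (-1) (by norm_num)
    have h2 := (tendsto_order.1 hp).2 1 (by norm_num)
    filter_upwards [h1, h2] with n ha hb using ⟨ha, hb⟩
  -- the key limit for a fixed 1 < c
  have keyF : ∀ c : ℝ, 1 < c → Tendsto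
      (fun n => ((c+1) ^ (p n) - (c-1) ^ (p n) - ((u - x) ^ (p n) - (x + u) ^ (p n))) / (p n))
      atTop (nhds (Real.log (c+1) - Real.log (c-1) - (Real.log (u-x) - Real.log (x+u)))) := by
    intro c hc
    have l1 := slopeLim (c+1) (by linarith) p hp0 hp
    have l2 := slopeLim (c-1) (by linarith) p hp0 hp
    have l3 := slopeLim (u-x) hB p hp0 hp
    have l4 := slopeLim (x+u) hA p hp0 hp
    have := ((l1.sub l2).sub (l3.sub l4))
    refine this.congr fun n => ?_
    ring
  rw [tendsto_order]
  constructor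
  · -- lower bound
    intro b hb
    set c : ℝ := max b ((1 + -u / x) / 2) with hcdef
    have hc1 : (1:ℝ) < c := lt_max_of_lt_right (by linarith)
    have hclt : c < -u / x := max_lt hb (by linarith)
    have hbc : b ≤ c := le_max_left _ _
    have hpos : 0 < Real.log (c+1) - Real.log (c-1) - (Real.log (u-x) - Real.log (x+u)) := by
      have hxc : -u < x * c := by
        have := mul_lt_mul_of_neg_left hclt hx2
        have hxne : x ≠ 0 := ne_of_lt hx2
        rw [show x * (-u / x) = -u by field_simp] at this
        linarith
      have hineq : (c - 1) * (u - x) < (c + 1) * (x + u) := by nlinarith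
      have hl : Real.log ((c-1) * (u-x)) < Real.log ((c+1) * (x+u)) :=
        Real.log_lt_log (by nlinarith) hineq
      rw [Real.log_mul (by linarith) (by linarith),
        Real.log_mul (by linarith) (by linarith)] at hl
      linarith
    have hev := (tendsto_order.1 (keyF c hc1)).1 0 hpos
    filter_upwards [hev, hpsmall] with n hn ⟨hl, hr⟩
    have key : c < y n := by
      apply solve_lt (p n) (hp0 n) hl hr hc1 (hy n)
      have heq := hbis' n
      have : ((c+1) ^ (p n) - (c-1) ^ (p n) - ((y n + 1) ^ (p n) - (y n - 1) ^ (p n))) / (p n)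
          = ((c+1) ^ (p n) - (c-1) ^ (p n) - ((u - x) ^ (p n) - (x + u) ^ (p n))) / (p n) := by
        rw [show (y n + 1) ^ (p n) - (y n - 1) ^ (p n)
            = (u - x) ^ (p n) - (x + u) ^ (p n) by linarith]
      rw [this]
      exact hn
    linarith
  · -- upper bound
    intro b hb
    have hb1 : (1:ℝ) < b := lt_trans hystar hb
    have hneg : Real.log (b+1) - Real.log (b-1) - (Real.log (u-x) - Real.log (x+u)) < 0 := by
      have hxc : x * b < -u := by
        have := mul_lt_mul_of_neg_left hb hx2
        have hxne : x ≠ 0 := ne_of_lt hx2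
        rw [show x * (-u / x) = -u by field_simp] at this
        linarith
      have hineq : (b + 1) * (x + u) < (b - 1) * (u - x) := by nlinarith
      have hl : Real.log ((b+1) * (x+u)) < Real.log ((b-1) * (u-x)) :=
        Real.log_lt_log (by nlinarith) hineq
      rw [Real.log_mul (by linarith) (by linarith),
        Real.log_mul (by linarith) (by linarith)] at hl
      linarith
    have hev := (tendsto_order.1 (keyF b hb1)).2 0 hneg
    filter_upwards [hev, hpsmall] with n hn ⟨hl, hr⟩
    apply solve_lt (p n) (hp0 n) hl hr (hy n) hb1
    have heq := hbis' n
    have hEq : (y n + 1) ^ (p n) - (y n - 1) ^ (p n)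
        = (u - x) ^ (p n) - (x + u) ^ (p n) := by linarith
    rw [hEq]
    have : ((u - x) ^ (p n) - (x + u) ^ (p n) - ((b+1) ^ (p n) - (b-1) ^ (p n))) / (p n)
        = -(((b+1) ^ (p n) - (b-1) ^ (p n) - ((u - x) ^ (p n) - (x + u) ^ (p n))) / (p n)) := by
      ring
    rw [this]
    linarith
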